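/- Let φ : ℝ → ℝ be essentially bounded and measurable and α ∈ ℝ. The following are equivalent: (i) for every g ∈ L¹(ℝ), ∫_ℝ φ(x+s) g(x) dx → α ∫_ℝ g(x) dx as s → ∞ (the translates of φ converge to the constant α in the weak* sense); (ii) φ is almost convergent to α, and for every s ∈ ℝ and every g ∈ L¹(ℝ), ∫_ℝ (φ(x+s+t) − φ(x+t)) g(t) dt → 0 as x → ∞. -/

import Mathlib

open MeasureTheory Filter

/-- `φ` is almost convergent (P-summable) to `α`. -/
def AlmostConvergentTo (φ : ℝ → ℝ) (α : ℝ) : Prop :=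
  Tendsto (fun θ : ℝ =>
      limsup (fun x : ℝ => (1 / θ) * ∫ t in x..(x + θ), φ t) atTop) atTop (nhds α) ∧
  Tendsto (fun θ : ℝ =>
      liminf (fun x : ℝ => (1 / θ) * ∫ t in x..(x + θ), φ t) atTop) atTop (nhds α)

section AuxLemmas

lemma aux_integrable {φ : ℝ → ℝ} {C : ℝ} {g : ℝ → ℝ} (hm : Measurable φ)
    (hb : ∀ x, |φ x| ≤ C) (hg : Integrable g) (s : ℝ) :
    Integrable (fun t => φ (t + s) * g t) := by
  refine Integrable.bdd_mul hg ((hm.comp (measurable_add_const s)).aestronglyMeasurable) (c := C) (Filter.Eventually.of_forall ?_)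
  exact fun t => by simpa [Real.norm_eq_abs] using hb (t + s)

lemma aux_F_abs_le {φ : ℝ → ℝ} {C : ℝ} {g : ℝ → ℝ} (hm : Measurable φ)
    (hb : ∀ x, |φ x| ≤ C) (hg : Integrable g) (s : ℝ) :
    |∫ t, φ (t + s) * g t| ≤ C * ∫ t, |g t| := by
  rw [← Real.norm_eq_abs]
  calc ‖∫ t, φ (t + s) * g t‖ ≤ ∫ t, ‖φ (t + s) * g t‖ := norm_integral_le_integral_norm _
    _ ≤ ∫ t, C * |g t| := by
        refine integral_mono_of_nonneg (Filter.Eventually.of_forall fun t => norm_nonneg _)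
          (hg.abs.const_mul C) (Filter.Eventually.of_forall fun t => ?_)
        simp only [Real.norm_eq_abs, abs_mul]
        exact mul_le_mul_of_nonneg_right (hb _) (abs_nonneg _)
    _ = C * ∫ t, |g t| := integral_const_mul _ _

lemma aux_F_meas {φ : ℝ → ℝ} {g : ℝ → ℝ} (hm : Measurable φ) (hg : StronglyMeasurable g) :
    Measurable (fun s => ∫ t, φ (t + s) * g t) := by
  have : StronglyMeasurable (fun s => ∫ t, φ (t + s) * g t) := by
    apply MeasureTheory.StronglyMeasurable.integral_prod_right'
      (f := fun p : ℝ × ℝ => φ (p.2 + p.1) * g p.2)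
    exact ((hm.comp ((measurable_snd.add measurable_fst))).stronglyMeasurable.mul
      (hg.comp_measurable measurable_snd))
  exact this.measurable

lemma aux_fubini {φ : ℝ → ℝ} {C : ℝ} {g : ℝ → ℝ} (hm : Measurable φ)
    (hb : ∀ x, |φ x| ≤ C) (hg : Integrable g) (hgs : StronglyMeasurable g)
    {θ : ℝ} (hθ : 0 < θ) (x : ℝ) :
    ∫ u in x..(x + θ), (∫ t, φ (t + u) * g t) =
      ∫ t, g t * ∫ v in (t + x)..(t + x + θ), φ v := by
  have hle : x ≤ x + θ := by linarith
  rw [intervalIntegral.integral_of_le hle]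
  have hint : Integrable (Function.uncurry fun u t => φ (t + u) * g t)
      ((volume.restrict (Set.Ioc x (x + θ))).prod volume) := by
    have hmeas : AEStronglyMeasurable (Function.uncurry fun u t => φ (t + u) * g t)
        ((volume.restrict (Set.Ioc x (x + θ))).prod volume) :=
      (((hm.comp (measurable_snd.add measurable_fst)).stronglyMeasurable.mul
        (hgs.comp_measurable measurable_snd))).aestronglyMeasurable
    refine Integrable.mono' (g := fun p : ℝ × ℝ => C * |g p.2|) ?_ hmeas
      (Filter.Eventually.of_forall fun p => ?_)
    · exact (integrable_const C).mul_prod hg.abs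
    · simp only [Function.uncurry, Real.norm_eq_abs, abs_mul]
      exact mul_le_mul_of_nonneg_right (hb _) (abs_nonneg _)
  rw [MeasureTheory.integral_integral_swap hint]
  refine integral_congr_ae (Filter.Eventually.of_forall fun t => ?_)
  show (∫ u in Set.Ioc x (x + θ), φ (t + u) * g t) = _
  rw [← intervalIntegral.integral_of_le hle, intervalIntegral.integral_mul_const,
    intervalIntegral.integral_comp_add_left φ t, mul_comm, ← add_assoc]

lemma aux_intervalIntegrable {F : ℝ → ℝ} {M : ℝ} (hF : Measurable F) (hFb : ∀ s, |F s| ≤ M)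
    (a b : ℝ) : IntervalIntegrable F volume a b := by
  rw [intervalIntegrable_iff]
  have : IsFiniteMeasure (volume.restrict (Set.uIoc a b)) := by
    rw [Set.uIoc]; infer_instance
  exact Integrable.mono' (integrable_const M) hF.aestronglyMeasurable.restrict
    (Filter.Eventually.of_forall fun s => by simpa [Real.norm_eq_abs] using hFb s)

lemma aux_avg_sub {F : ℝ → ℝ} {M : ℝ} (hF : Measurable F) (hFb : ∀ s, |F s| ≤ M)
    {θ : ℝ} (hθ : 0 < θ)
    (hT : ∀ s : ℝ, Tendsto (fun x => F (x + s) - F x) atTop (nhds 0)) :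
    Tendsto (fun x => (1 / θ) * (∫ u in x..(x + θ), F u) - F x) atTop (nhds 0) := by
  have key : ∀ x : ℝ, (1 / θ) * (∫ u in x..(x + θ), F u) - F x
      = (1 / θ) * ∫ u in (0:ℝ)..θ, (F (x + u) - F x) := by
    intro x
    have h1 : (∫ u in (0:ℝ)..θ, F (x + u)) = ∫ u in x..(x + θ), F u := by
      simpa using intervalIntegral.integral_comp_add_left F x (a := 0) (b := θ)
    have h2 : IntervalIntegrable (fun u => F (x + u)) volume 0 θ :=
      aux_intervalIntegrable (hF.comp (measurable_const_add x)) (fun s => hFb _) 0 θ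
    rw [intervalIntegral.integral_sub h2 intervalIntegrable_const, h1,
      intervalIntegral.integral_const]
    field_simp
    simp
  simp only [key]
  rw [Filter.tendsto_iff_seq_tendsto]
  intro xs hxs
  have : Tendsto (fun n => ∫ u in (0:ℝ)..θ, (F (xs n + u) - F (xs n))) atTop (nhds 0) := by
    have h0 : ∀ n, ∫ u in (0:ℝ)..θ, (F (xs n + u) - F (xs n))
        = ∫ u in Set.Ioc (0:ℝ) θ, (F (xs n + u) - F (xs n)) :=
      fun n => intervalIntegral.integral_of_le hθ.le
    simp only [h0]
    have H : Tendsto (fun n => ∫ u in Set.Ioc (0:ℝ) θ, (F (xs n + u) - F (xs n)))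
        atTop (nhds (∫ _u in Set.Ioc (0:ℝ) θ, (0:ℝ))) := by
      refine MeasureTheory.tendsto_integral_of_dominated_convergence (fun _ => 2 * M)
        (fun n => (((hF.comp (measurable_const_add (xs n))).sub measurable_const)
          |>.aestronglyMeasurable.restrict))
        (integrable_const (μ := volume.restrict (Set.Ioc (0:ℝ) θ)) (2 * M))
        (fun n => Filter.Eventually.of_forall fun u => ?_)
        (Filter.Eventually.of_forall fun u => ?_)
      · rw [Real.norm_eq_abs]
        show |F (xs n + u) - F (xs n)| ≤ 2 * M
        have h2 := hFb (xs n + u); have h3 := hFb (xs n)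
        have h1 : |F (xs n + u) - F (xs n)| ≤ |F (xs n + u)| + |F (xs n)| := abs_sub _ _
        linarith
      · have := (hT u).comp hxs
        simpa [Function.comp_def] using this
    simpa using H
  have := this.const_mul (1 / θ)
  simpa [Function.comp_def] using this

lemma aux_avg_bound {φ : ℝ → ℝ} {C : ℝ} (hb : ∀ x, |φ x| ≤ C) {θ : ℝ} (hθ : 0 < θ) (y : ℝ) :
    |(1 / θ) * ∫ t in y..(y + θ), φ t| ≤ C := by
  have h1 : ‖∫ t in y..(y + θ), φ t‖ ≤ C * |(y + θ) - y| :=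
    intervalIntegral.norm_integral_le_of_norm_le_const fun t _ => by
      simpa [Real.norm_eq_abs] using hb t
  rw [abs_mul]
  rw [Real.norm_eq_abs] at h1
  have h2 : |(y + θ) - y| = θ := by rw [add_sub_cancel_left, abs_of_pos hθ]
  rw [h2] at h1
  have h3 : |1 / θ| = 1 / θ := abs_of_pos (by positivity)
  rw [h3]
  calc 1 / θ * |∫ t in y..(y + θ), φ t| ≤ 1 / θ * (C * θ) := by
        exact mul_le_mul_of_nonneg_left h1 (by positivity)
    _ = C := by field_simp

lemma aux_choose_theta {φ : ℝ → ℝ} {C α : ℝ} (hb : ∀ x, |φ x| ≤ C)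
    (hAC : AlmostConvergentTo φ α) {ε : ℝ} (hε : 0 < ε) :
    ∃ θ : ℝ, 0 < θ ∧ ∀ᶠ y in atTop, |(1 / θ) * (∫ t in y..(y + θ), φ t) - α| ≤ ε := by
  have h1 : ∀ᶠ θ in atTop, limsup (fun x : ℝ => (1 / θ) * ∫ t in x..(x + θ), φ t) atTop < α + ε :=
    hAC.1.eventually_lt_const (by linarith)
  have h2 : ∀ᶠ θ in atTop, α - ε < liminf (fun x : ℝ => (1 / θ) * ∫ t in x..(x + θ), φ t) atTop :=
    hAC.2.eventually_const_lt (by linarith)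
  obtain ⟨θ, hθ1, hθ2, hθ3⟩ := (h1.and (h2.and (eventually_gt_atTop (0:ℝ)))).exists
  refine ⟨θ, hθ3, ?_⟩
  have hbdd1 : IsBoundedUnder (· ≤ ·) atTop (fun x : ℝ => (1 / θ) * ∫ t in x..(x + θ), φ t) :=
    isBoundedUnder_of ⟨C, fun y => (abs_le.mp (aux_avg_bound hb hθ3 y)).2⟩
  have hbdd2 : IsBoundedUnder (· ≥ ·) atTop (fun x : ℝ => (1 / θ) * ∫ t in x..(x + θ), φ t) :=
    isBoundedUnder_of ⟨-C, fun y => (abs_le.mp (aux_avg_bound hb hθ3 y)).1⟩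
  have e1 := eventually_lt_of_limsup_lt hθ1 hbdd1
  have e2 := eventually_lt_of_lt_liminf hθ2 hbdd2
  filter_upwards [e1, e2] with y hy1 hy2
  rw [abs_le]
  constructor <;> linarith

lemma aux_tail {g : ℝ → ℝ} (hg : Integrable g) {ε : ℝ} (hε : 0 < ε) :
    ∃ R : ℝ, 0 < R ∧ ∫ t in Set.Iic (-R), |g t| ≤ ε := by
  have hanti : Antitone (fun n : ℕ => Set.Iic (-(n:ℝ))) := fun m n hmn =>
    Set.Iic_subset_Iic.2 (by exact_mod_cast neg_le_neg (by exact_mod_cast hmn))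
  have hempty : (⋂ n : ℕ, Set.Iic (-(n:ℝ))) = ∅ := by
    ext x
    simp only [Set.mem_iInter, Set.mem_Iic, Set.mem_empty_iff_false, iff_false, not_forall]
    obtain ⟨n, hn⟩ := exists_nat_gt (-x)
    exact ⟨n, by push_neg; linarith⟩
  have := tendsto_setIntegral_of_antitone (f := fun t => |g t|) (μ := volume)
    (fun n : ℕ => measurableSet_Iic) hanti ⟨0, hg.abs.integrableOn⟩
  rw [hempty] at this
  simp only [Measure.restrict_empty, integral_zero_measure] at this
  have hev := this.eventually_le_const (show (0:ℝ) < ε by linarith) |>.exists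
  obtain ⟨n, hn⟩ := hev
  refine ⟨(n:ℝ) + 1, by positivity, ?_⟩
  refine le_trans ?_ hn
  refine setIntegral_mono_set hg.abs.integrableOn
    (Filter.Eventually.of_forall fun t => abs_nonneg _) ?_
  exact HasSubset.Subset.eventuallyLE (Set.Iic_subset_Iic.2 (by linarith))

lemma backward_core {φ : ℝ → ℝ} {C α : ℝ} {g : ℝ → ℝ} (hm : Measurable φ) (hC : 0 ≤ C)
    (hb : ∀ x, |φ x| ≤ C)
    (hAC : AlmostConvergentTo φ α) (hg : Integrable g) (hgs : StronglyMeasurable g)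
    (hT : ∀ s : ℝ, Tendsto
      (fun x => (∫ t, φ (t + (x + s)) * g t) - ∫ t, φ (t + x) * g t) atTop (nhds 0)) :
    Tendsto (fun s => ∫ t, φ (t + s) * g t) atTop (nhds (α * ∫ t, g t)) := by
  set F : ℝ → ℝ := fun s => ∫ t, φ (t + s) * g t with hFdef
  set G : ℝ := ∫ t, |g t| with hGdef
  have hG0 : 0 ≤ G := integral_nonneg fun t => abs_nonneg _
  have hFmeas : Measurable F := aux_F_meas hm hgs
  have hFb : ∀ s, |F s| ≤ C * G := fun s => aux_F_abs_le hm hb hg s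
  rw [Metric.tendsto_nhds]
  intro ε hε
  have hε₁ : 0 < ε / 4 / (G + 1) := by positivity
  have hε₂ : 0 < ε / 4 / (C + |α| + 1) := by positivity
  obtain ⟨θ, hθ, hAev⟩ := aux_choose_theta hb hAC hε₁
  obtain ⟨R, hR, htail⟩ := aux_tail hg hε₂
  obtain ⟨X₀, hX₀⟩ := eventually_atTop.mp hAev
  set A : ℝ → ℝ := fun y => (1 / θ) * ∫ v in y..(y + θ), φ v with hAdef
  have hAcont : Continuous A := by
    have hint : ∀ a b : ℝ, IntervalIntegrable φ volume a b := aux_intervalIntegrable hm hb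
    have hP : Continuous fun y => ∫ v in (0:ℝ)..y, φ v :=
      intervalIntegral.continuous_primitive hint 0
    have hAeq : A = fun y => (1 / θ) *
        ((∫ v in (0:ℝ)..(y + θ), φ v) - ∫ v in (0:ℝ)..y, φ v) := by
      funext y
      rw [hAdef]
      congr 1
      rw [intervalIntegral.integral_interval_sub_left (hint 0 (y + θ)) (hint 0 y)]
    rw [hAeq]
    exact continuous_const.mul ((hP.comp (continuous_id.add continuous_const)).sub hP)
  have hAb : ∀ y, |A y| ≤ C := fun y => aux_avg_bound hb hθ y
  have havg : ∀ s ≥ X₀ + R, |(1 / θ) * (∫ u in s..(s + θ), F u) - α * ∫ t, g t|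
      ≤ ε / 4 / (G + 1) * G + ε / 4 / (C + |α| + 1) * (C + |α|) := by
    intro s hs
    have fub := aux_fubini hm hb hg hgs hθ s
    have e1 : (1 / θ) * (∫ u in s..(s + θ), F u) = ∫ t, A (t + s) * g t := by
      rw [hFdef, fub, ← integral_const_mul]
      congr 1; funext t
      rw [hAdef]; ring_nf
    have e2 : α * ∫ t, g t = ∫ t, α * g t := (integral_const_mul α g).symm
    have hAg : Integrable (fun t => A (t + s) * g t) :=
      Integrable.bdd_mul hg ((hAcont.comp (continuous_id.add continuous_const))
        |>.aestronglyMeasurable) (c := C) (Filter.Eventually.of_forall fun t => by simpa [Real.norm_eq_abs] using hAb (t + s))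
    have hαg : Integrable (fun t => α * g t) := hg.const_mul α
    rw [e1, e2, ← integral_sub hAg hαg]
    have hsub : ∀ t, A (t + s) * g t - α * g t = (A (t + s) - α) * g t := fun t => by ring
    simp only [hsub]
    have hnorm : |∫ t, (A (t + s) - α) * g t| ≤ ∫ t, |A (t + s) - α| * |g t| := by
      rw [← Real.norm_eq_abs (∫ t, (A (t + s) - α) * g t)]
      refine le_trans (norm_integral_le_integral_norm _) (le_of_eq ?_)
      congr 1; funext t; rw [Real.norm_eq_abs, abs_mul]
    refine le_trans hnorm ?_
    have hint : Integrable (fun t => |A (t + s) - α| * |g t|) := by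
      refine Integrable.bdd_mul hg.abs ?_ (c := C + |α|) (Filter.Eventually.of_forall fun t => ?_)
      · exact (((hAcont.comp (continuous_id.add continuous_const)).sub
          continuous_const).abs).aestronglyMeasurable
      · rw [Real.norm_eq_abs, abs_abs]
        calc |A (t + s) - α| ≤ |A (t + s)| + |α| := abs_sub _ _
          _ ≤ C + |α| := add_le_add_left (hAb _) _
    have hsplit : (∫ t, |A (t + s) - α| * |g t|) =
        (∫ t in Set.Iic (-R), |A (t + s) - α| * |g t|) +
        ∫ t in Set.Ioi (-R), |A (t + s) - α| * |g t| := by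
      rw [← Set.compl_Iic]
      exact (integral_add_compl measurableSet_Iic hint).symm
    rw [hsplit]
    have b1 : (∫ t in Set.Iic (-R), |A (t + s) - α| * |g t|)
        ≤ ε / 4 / (C + |α| + 1) * (C + |α|) := by
      have step : (∫ t in Set.Iic (-R), |A (t + s) - α| * |g t|)
          ≤ ∫ t in Set.Iic (-R), (C + |α|) * |g t| := by
        refine setIntegral_mono_on hint.integrableOn
          ((hg.abs.const_mul (C + |α|)).integrableOn) measurableSet_Iic fun t _ => ?_
        refine mul_le_mul_of_nonneg_right ?_ (abs_nonneg _)
        calc |A (t + s) - α| ≤ |A (t + s)| + |α| := abs_sub _ _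
          _ ≤ C + |α| := add_le_add_left (hAb _) _
      refine le_trans step ?_
      rw [integral_const_mul]
      rw [mul_comm (ε / 4 / (C + |α| + 1)) (C + |α|)]
      refine mul_le_mul_of_nonneg_left htail (by positivity)
    have b2 : (∫ t in Set.Ioi (-R), |A (t + s) - α| * |g t|)
        ≤ ε / 4 / (G + 1) * G := by
      have step : (∫ t in Set.Ioi (-R), |A (t + s) - α| * |g t|)
          ≤ ∫ t in Set.Ioi (-R), (ε / 4 / (G + 1)) * |g t| := by
        refine setIntegral_mono_on hint.integrableOn
          ((hg.abs.const_mul _).integrableOn) measurableSet_Ioi fun t ht => ?_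
        refine mul_le_mul_of_nonneg_right ?_ (abs_nonneg _)
        have : X₀ ≤ t + s := by
          simp only [Set.mem_Ioi] at ht
          linarith
        simpa [hAdef] using hX₀ (t + s) this
      refine le_trans step ?_
      rw [integral_const_mul]
      refine mul_le_mul_of_nonneg_left ?_ (le_of_lt hε₁)
      exact setIntegral_le_integral hg.abs (Filter.Eventually.of_forall fun t => abs_nonneg _)
    linarith
  have hdiff : Tendsto (fun x => (1 / θ) * (∫ u in x..(x + θ), F u) - F x) atTop (nhds 0) :=
    aux_avg_sub hFmeas hFb hθ hT
  have hdiffev : ∀ᶠ s in atTop, |(1 / θ) * (∫ u in s..(s + θ), F u) - F s| < ε / 4 := by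
    have := Metric.tendsto_nhds.mp hdiff (ε / 4) (by positivity)
    simpa [Real.dist_eq] using this
  filter_upwards [hdiffev, eventually_ge_atTop (X₀ + R)] with s h1 h2
  rw [Real.dist_eq]
  have h3 := havg s h2
  have k1 : ε / 4 / (G + 1) * G ≤ ε / 4 := by
    rw [div_mul_eq_mul_div, div_le_iff₀ (by positivity)]
    nlinarith
  have k2 : ε / 4 / (C + |α| + 1) * (C + |α|) ≤ ε / 4 := by
    rw [div_mul_eq_mul_div, div_le_iff₀ (by positivity)]
    nlinarith [abs_nonneg α]
  have h5 : |F s - α * ∫ t, g t| ≤ |F s - (1 / θ) * (∫ u in s..(s + θ), F u)|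
      + |(1 / θ) * (∫ u in s..(s + θ), F u) - α * ∫ t, g t| := abs_sub_le _ _ _
  have h6 : |F s - (1 / θ) * (∫ u in s..(s + θ), F u)|
      = |(1 / θ) * (∫ u in s..(s + θ), F u) - F s| := abs_sub_comm _ _
  linarith

lemma forward_AC {φ : ℝ → ℝ} {α : ℝ}
    (H : ∀ g : ℝ → ℝ, Integrable g →
      Tendsto (fun s : ℝ => ∫ x : ℝ, φ (x + s) * g x) atTop (nhds (α * ∫ x : ℝ, g x))) :
    AlmostConvergentTo φ α := by
  have key : ∀ θ : ℝ, 0 < θ →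
      Tendsto (fun s : ℝ => (1 / θ) * ∫ t in s..(s + θ), φ t) atTop (nhds α) := by
    intro θ hθ
    set g : ℝ → ℝ := (Set.Ioc (0:ℝ) θ).indicator (fun _ => (1:ℝ)) with hgdef
    have hgint : Integrable g := by
      rw [hgdef, integrable_indicator_iff measurableSet_Ioc]
      exact integrableOn_const measure_Ioc_lt_top.ne
    have hgI : ∫ x, g x = θ := by
      rw [hgdef, integral_indicator_const _ measurableSet_Ioc]
      simp [Real.volume_Ioc, hθ.le]
    have hint : ∀ s : ℝ, ∫ x, φ (x + s) * g x = ∫ t in s..(s + θ), φ t := by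
      intro s
      have : (fun x => φ (x + s) * g x) = (Set.Ioc (0:ℝ) θ).indicator (fun x => φ (x + s)) := by
        funext x
        by_cases hx : x ∈ Set.Ioc (0:ℝ) θ
        · simp [hgdef, Set.indicator_of_mem hx]
        · simp [hgdef, Set.indicator_of_notMem hx]
      rw [this, integral_indicator measurableSet_Ioc,
        ← intervalIntegral.integral_of_le hθ.le,
        intervalIntegral.integral_comp_add_right φ s, zero_add, add_comm θ s]
    have h1 := H g hgint
    rw [hgI] at h1
    simp only [hint] at h1
    have h2 := h1.const_mul (1 / θ)
    have : 1 / θ * (α * θ) = α := by field_simp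
    rw [this] at h2
    exact h2.congr fun s => by ring
  constructor
  · have heq : ∀ᶠ θ : ℝ in atTop,
        limsup (fun x : ℝ => (1 / θ) * ∫ t in x..(x + θ), φ t) atTop = α := by
      filter_upwards [eventually_gt_atTop (0:ℝ)] with θ hθ
      exact (key θ hθ).limsup_eq
    exact Tendsto.congr' (Filter.EventuallyEq.symm heq) tendsto_const_nhds
  · have heq : ∀ᶠ θ : ℝ in atTop,
        liminf (fun x : ℝ => (1 / θ) * ∫ t in x..(x + θ), φ t) atTop = α := by
      filter_upwards [eventually_gt_atTop (0:ℝ)] with θ hθ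
      exact (key θ hθ).liminf_eq
    exact Tendsto.congr' (Filter.EventuallyEq.symm heq) tendsto_const_nhds

lemma forward_T {φ : ℝ → ℝ} {C α : ℝ} (hm : Measurable φ) (hb : ∀ x, |φ x| ≤ C)
    (H : ∀ g : ℝ → ℝ, Integrable g →
      Tendsto (fun s : ℝ => ∫ x : ℝ, φ (x + s) * g x) atTop (nhds (α * ∫ x : ℝ, g x)))
    (s : ℝ) (g : ℝ → ℝ) (hg : Integrable g) :
    Tendsto (fun x : ℝ => ∫ t : ℝ, (φ (x + s + t) - φ (x + t)) * g t) atTop (nhds 0) := by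
  have hre : ∀ x : ℝ, (∫ t : ℝ, (φ (x + s + t) - φ (x + t)) * g t)
      = (∫ t : ℝ, φ (t + (x + s)) * g t) - ∫ t : ℝ, φ (t + x) * g t := by
    intro x
    rw [← integral_sub (aux_integrable hm hb hg (x + s)) (aux_integrable hm hb hg x)]
    congr 1; funext t
    have e1 : x + s + t = t + (x + s) := by ring
    have e2 : x + t = t + x := by ring
    rw [e1, e2]; ring
  simp only [hre]
  have h1 : Tendsto (fun x : ℝ => ∫ t : ℝ, φ (t + (x + s)) * g t) atTop
      (nhds (α * ∫ x : ℝ, g x)) :=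
    (H g hg).comp (tendsto_atTop_add_const_right atTop s tendsto_id)
  have h2 : Tendsto (fun x : ℝ => ∫ t : ℝ, φ (t + x) * g t) atTop
      (nhds (α * ∫ x : ℝ, g x)) := H g hg
  simpa using h1.sub h2

theorem main_bounded {φ : ℝ → ℝ} {C α : ℝ} (hm : Measurable φ) (hC : 0 ≤ C)
    (hb : ∀ x, |φ x| ≤ C) :
    (∀ g : ℝ → ℝ, Integrable g →
        Tendsto (fun s : ℝ => ∫ x : ℝ, φ (x + s) * g x) atTop
          (nhds (α * ∫ x : ℝ, g x)))
    ↔ (AlmostConvergentTo φ α ∧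
        ∀ s : ℝ, ∀ g : ℝ → ℝ, Integrable g →
          Tendsto (fun x : ℝ => ∫ t : ℝ, (φ (x + s + t) - φ (x + t)) * g t) atTop
            (nhds 0)) := by
  constructor
  · intro H
    exact ⟨forward_AC H, fun s g hg => forward_T hm hb H s g hg⟩
  · rintro ⟨hAC, hT⟩ g hg
    set g' := hg.1.mk g with hg'def
    have hgs : StronglyMeasurable g' := hg.1.stronglyMeasurable_mk
    have heq : g =ᵐ[volume] g' := hg.1.ae_eq_mk
    have hg' : Integrable g' := hg.congr heq
    have hI : (∫ t, g t) = ∫ t, g' t := integral_congr_ae heq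
    have hFeq : ∀ s : ℝ, (∫ t, φ (t + s) * g t) = ∫ t, φ (t + s) * g' t := fun s =>
      integral_congr_ae (heq.mono fun t ht => by simp only [ht])
    have hT' : ∀ s : ℝ, Tendsto
        (fun x => (∫ t, φ (t + (x + s)) * g' t) - ∫ t, φ (t + x) * g' t) atTop (nhds 0) := by
      intro s
      have h0 := hT s g hg
      have hre : ∀ x : ℝ, (∫ t : ℝ, (φ (x + s + t) - φ (x + t)) * g t)
          = (∫ t, φ (t + (x + s)) * g' t) - ∫ t, φ (t + x) * g' t := by
        intro x
        rw [← hFeq (x + s), ← hFeq x,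
          ← integral_sub (aux_integrable hm hb hg (x + s)) (aux_integrable hm hb hg x)]
        congr 1; funext t
        have e1 : x + s + t = t + (x + s) := by ring
        have e2 : x + t = t + x := by ring
        rw [e1, e2]; ring
      simpa only [hre] using h0
    have core := backward_core hm hC hb hAC hg' hgs hT'
    rw [hI]
    exact core.congr fun s => (hFeq s).symm

end AuxLemmas

/-- Tauberian theorem: the translates of `φ` converge weak* to the constant `α` iff
`φ` is almost convergent to `α` and the differences of translates `φ_{x+s} - φ_x`
converge weak* to `0` as `x → ∞` for every `s`. -/
theorem weakstar_iff_almostConvergent_and_tauberian (φ : ℝ → ℝ) (hmeas : Measurable φ)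
    (hbdd : MemLp φ ⊤ (volume : Measure ℝ)) (α : ℝ) :
    (∀ g : ℝ → ℝ, Integrable g →
        Tendsto (fun s : ℝ => ∫ x : ℝ, φ (x + s) * g x) atTop
          (nhds (α * ∫ x : ℝ, g x)))
    ↔ (AlmostConvergentTo φ α ∧
        ∀ s : ℝ, ∀ g : ℝ → ℝ, Integrable g →
          Tendsto (fun x : ℝ => ∫ t : ℝ, (φ (x + s + t) - φ (x + t)) * g t) atTop
            (nhds 0)) := by
  -- extract an essential bound
  set C : ℝ := (eLpNormEssSup φ volume).toReal with hCdef
  have hS : eLpNormEssSup φ volume < ⊤ := by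
    have := hbdd.2
    rwa [eLpNorm_exponent_top] at this
  have hC : 0 ≤ C := ENNReal.toReal_nonneg
  have hae : ∀ᵐ x : ℝ, |φ x| ≤ C := by
    filter_upwards [ae_le_eLpNormEssSup (f := φ) (μ := volume)] with x hx
    have h1 : ((‖φ x‖₊ : ENNReal)).toReal ≤ C :=
      ENNReal.toReal_mono hS.ne hx
    simpa [Real.norm_eq_abs] using h1
  -- truncation
  set ψ : ℝ → ℝ := fun x => max (min (φ x) C) (-C) with hψdef
  have hψm : Measurable ψ := (hmeas.min measurable_const).max measurable_const
  have hψb : ∀ x, |ψ x| ≤ C := fun x => abs_le.2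
    ⟨le_max_right _ _, max_le (min_le_right _ _) (neg_le_self hC)⟩
  have hψφ : φ =ᵐ[volume] ψ := by
    filter_upwards [hae] with x hx
    obtain ⟨h1, h2⟩ := abs_le.1 hx
    rw [hψdef]
    simp only [min_eq_left h2, max_eq_left h1]
  -- transfer of translated integrals (right translation)
  have htransR : ∀ c : ℝ, (fun t : ℝ => φ (t + c)) =ᵐ[volume] fun t => ψ (t + c) := by
    intro c
    have := (measurePreserving_add_right (volume : Measure ℝ) c).quasiMeasurePreserving.ae_eq hψφ
    exact this
  have htransL : ∀ c : ℝ, (fun t : ℝ => φ (c + t)) =ᵐ[volume] fun t => ψ (c + t) := by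
    intro c
    have := (measurePreserving_add_left (volume : Measure ℝ) c).quasiMeasurePreserving.ae_eq hψφ
    exact this
  have eq1 : ∀ (g : ℝ → ℝ) (s : ℝ), (∫ x, φ (x + s) * g x) = ∫ x, ψ (x + s) * g x := by
    intro g s
    refine integral_congr_ae ?_
    filter_upwards [htransR s] with x hx
    simp only [hx]
  have eq2 : ∀ (x s : ℝ) (g : ℝ → ℝ),
      (∫ t : ℝ, (φ (x + s + t) - φ (x + t)) * g t)
        = ∫ t : ℝ, (ψ (x + s + t) - ψ (x + t)) * g t := by
    intro x s g
    refine integral_congr_ae ?_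
    filter_upwards [htransL (x + s), htransL x] with t h1 h2
    simp only [h1, h2]
  have eqI : ∀ (a b : ℝ), (∫ t in a..b, φ t) = ∫ t in a..b, ψ t := by
    intro a b
    refine intervalIntegral.integral_congr_ae ?_
    filter_upwards [hψφ] with t ht _
    exact ht
  have eqAC : AlmostConvergentTo φ α ↔ AlmostConvergentTo ψ α := by
    have e1 : (fun θ : ℝ => limsup (fun x : ℝ => (1 / θ) * ∫ t in x..(x + θ), φ t) atTop)
        = fun θ : ℝ => limsup (fun x : ℝ => (1 / θ) * ∫ t in x..(x + θ), ψ t) atTop := by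
      funext θ; congr 1; funext x; rw [eqI]
    have e2 : (fun θ : ℝ => liminf (fun x : ℝ => (1 / θ) * ∫ t in x..(x + θ), φ t) atTop)
        = fun θ : ℝ => liminf (fun x : ℝ => (1 / θ) * ∫ t in x..(x + θ), ψ t) atTop := by
      funext θ; congr 1; funext x; rw [eqI]
    unfold AlmostConvergentTo
    rw [e1, e2]
  have main := main_bounded (φ := ψ) (C := C) (α := α) hψm hC hψb
  constructor
  · intro H
    have Hψ : ∀ g : ℝ → ℝ, Integrable g →
        Tendsto (fun s : ℝ => ∫ x : ℝ, ψ (x + s) * g x) atTop (nhds (α * ∫ x : ℝ, g x)) :=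
      fun g hg => (H g hg).congr fun s => eq1 g s
    obtain ⟨hAC, hT⟩ := main.mp Hψ
    exact ⟨eqAC.mpr hAC, fun s g hg => (hT s g hg).congr fun x => (eq2 x s g).symm⟩
  · rintro ⟨hAC, hT⟩
    have Hψ := main.mpr ⟨eqAC.mp hAC, fun s g hg => (hT s g hg).congr fun x => eq2 x s g⟩
    exact fun g hg => (Hψ g hg).congr fun s => (eq1 g s).symm
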